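/- Let X be an n×R random matrix whose entries are independent, with entry (j,r) distributed according to P_r on a finite alphabet 𝒳 ⊂ ℝ, and suppose ρ := max_{r} max_{x∈𝒳} P_r(x) < 1. Then Pr[rank(X) < R] ≤ Σ_{r=0}^{R-1} ρ^{n-r}; in particular Pr[rank(X) = R] → 1 as n → ∞. -/

import Mathlib

open Module Submodule in
lemma exists_coord_finset {n : ℕ} (V : Submodule ℝ (Fin n → ℝ)) :
    ∃ S : Finset (Fin n), S.card = Module.finrank ℝ V ∧
      ∀ x ∈ V, ∀ y ∈ V, (∀ j ∈ S, x j = y j) → x = y := by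
  classical
  set φ : Fin n → Module.Dual ℝ V := fun j => (LinearMap.proj j).comp V.subtype with hφ
  have hφ' : φ = V.subtype.dualMap ∘ (fun j => LinearMap.proj j (R := ℝ) (φ := fun _ : Fin n => ℝ)) := by
    funext j; rfl
  have hproj : Submodule.span ℝ (Set.range fun j : Fin n => LinearMap.proj j (R := ℝ) (φ := fun _ : Fin n => ℝ)) = ⊤ := by
    have hb : (fun j : Fin n => (Pi.basisFun ℝ (Fin n)).dualBasis j)
        = fun j : Fin n => LinearMap.proj j (R := ℝ) (φ := fun _ : Fin n => ℝ) := by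
      funext j; ext x
      simp [Basis.dualBasis_apply, Pi.basisFun_repr]
    rw [← hb]
    exact Basis.span_eq _
  have hspan : Submodule.span ℝ (Set.range φ) = ⊤ := by
    rw [hφ', Set.range_comp, Submodule.span_image, hproj, Submodule.map_top,
      LinearMap.range_eq_top]
    exact LinearMap.dualMap_surjective_of_injective V.injective_subtype
  obtain ⟨b, hbsub, hbspan, hbli⟩ := exists_linearIndependent ℝ (Set.range φ)
  rw [hspan] at hbspan
  have hbfin : b.Finite := (Set.finite_range φ).subset hbsub
  haveI : Fintype b := hbfin.fintype
  -- b is a basis of the dual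
  let B : Basis b ℝ (Module.Dual ℝ V) := Basis.mk hbli (by rw [Subtype.range_coe, hbspan])
  have hcard : Fintype.card b = Module.finrank ℝ V := by
    rw [← Subspace.dual_finrank_eq (K := ℝ) (V := V)]
    exact (Module.finrank_eq_card_basis B).symm
  -- choose preimages
  have hchoice : ∀ ψ : b, ∃ j : Fin n, φ j = (ψ : Module.Dual ℝ V) := fun ψ => hbsub ψ.2
  choose c hc using hchoice
  have hcinj : Function.Injective c := by
    intro ψ ψ' h
    apply Subtype.ext
    rw [← hc ψ, ← hc ψ', h]
  refine ⟨Finset.univ.image c, ?_, ?_⟩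
  · rw [Finset.card_image_of_injective _ hcinj, Finset.card_univ, hcard]
  · intro x hx y hy hxy
    have key : ∀ ψ : Module.Dual ℝ V, ψ (⟨x, hx⟩ - ⟨y, hy⟩) = 0 := by
      intro ψ
      have hψ : ψ ∈ Submodule.span ℝ b := by rw [hbspan]; trivial
      induction hψ using Submodule.span_induction with
      | mem ψ' hψ' =>
          have hcc := hc ⟨ψ', hψ'⟩
          have : ψ' (⟨x, hx⟩ - ⟨y, hy⟩) = φ (c ⟨ψ', hψ'⟩) ((⟨x, hx⟩ : V) - ⟨y, hy⟩) := by
            rw [hcc]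
          rw [this]
          have hj : c ⟨ψ', hψ'⟩ ∈ Finset.univ.image c := Finset.mem_image_of_mem c (Finset.mem_univ _)
          simp only [φ, LinearMap.comp_apply, LinearMap.proj_apply, map_sub]
          have := hxy _ hj
          simpa using sub_eq_zero_of_eq (hxy _ hj)
      | zero => simp
      | add ψ₁ ψ₂ h₁ h₂ ih₁ ih₂ => simp [ih₁, ih₂]
      | smul a ψ' h ih => simp [ih]
    have : (⟨x, hx⟩ : V) - ⟨y, hy⟩ = 0 := (Module.forall_dual_apply_eq_zero_iff ℝ _).mp key
    have := sub_eq_zero.mp this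
    exact congrArg Subtype.val this


open scoped Classical in
lemma span_prob_bound {n r : ℕ} (hrn : r ≤ n) (𝒳 : Finset ℝ) (Q : ℝ → ℝ)
    (hQ0 : ∀ x, 0 ≤ Q x) (hQsum : ∑ x ∈ 𝒳, Q x = 1) (ρ : ℝ) (hρ0 : 0 ≤ ρ)
    (hρ1 : ρ ≤ 1) (hρ : ∀ x ∈ 𝒳, Q x ≤ ρ)
    (V : Submodule ℝ (Fin n → ℝ)) (hV : Module.finrank ℝ V ≤ r)
    (hcoord : ∃ S : Finset (Fin n), S.card = Module.finrank ℝ V ∧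
      ∀ x ∈ V, ∀ y ∈ V, (∀ j ∈ S, x j = y j) → x = y) :
    ∑ c : Fin n → ↥𝒳, (∏ j, Q ((c j : ℝ))) * (if (fun j => ((c j : ℝ))) ∈ V then 1 else 0)
      ≤ ρ ^ (n - r) := by
  obtain ⟨S, hScard, hSinj⟩ := hcoord
  have hdr : S.card ≤ r := hScard ▸ hV
  have step1 : ∑ c : Fin n → ↥𝒳, (∏ j, Q ((c j : ℝ))) * (if (fun j => ((c j : ℝ))) ∈ V then 1 else 0)
      = ∑ c ∈ Finset.univ.filter (fun c : Fin n → ↥𝒳 => (fun j => ((c j : ℝ))) ∈ V),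
          ∏ j, Q ((c j : ℝ)) := by
    rw [Finset.sum_filter]
    refine Finset.sum_congr rfl fun c _ => ?_
    split <;> simp
  rw [step1]
  have step2 : ∀ c ∈ Finset.univ.filter (fun c : Fin n → ↥𝒳 => (fun j => ((c j : ℝ))) ∈ V),
      ∏ j, Q ((c j : ℝ)) ≤ (∏ j ∈ S, Q ((c j : ℝ))) * ρ ^ (n - S.card) := by
    intro c _
    rw [← Finset.prod_mul_prod_compl S (fun j => Q ((c j : ℝ)))]
    gcongr
    · exact Finset.prod_nonneg fun j _ => hQ0 _
    calc ∏ j ∈ Sᶜ, Q ((c j : ℝ)) ≤ ∏ _j ∈ Sᶜ, ρ :=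
          Finset.prod_le_prod (fun j _ => hQ0 _) (fun j _ => hρ _ (c j).2)
      _ = ρ ^ (n - S.card) := by
          rw [Finset.prod_const, Finset.card_compl, Fintype.card_fin]
  calc ∑ c ∈ Finset.univ.filter (fun c : Fin n → ↥𝒳 => (fun j => ((c j : ℝ))) ∈ V),
          ∏ j, Q ((c j : ℝ))
      ≤ ∑ c ∈ Finset.univ.filter (fun c : Fin n → ↥𝒳 => (fun j => ((c j : ℝ))) ∈ V),
          (∏ j ∈ S, Q ((c j : ℝ))) * ρ ^ (n - S.card) := Finset.sum_le_sum step2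
    _ = (∑ c ∈ Finset.univ.filter (fun c : Fin n → ↥𝒳 => (fun j => ((c j : ℝ))) ∈ V),
          ∏ j : ↥S, Q ((c j : ℝ))) * ρ ^ (n - S.card) := by
        rw [← Finset.sum_mul]
        congr 1
        refine Finset.sum_congr rfl fun c _ => ?_
        rw [Finset.prod_coe_sort S (fun j => Q ((c j : ℝ)))]
    _ ≤ 1 * ρ ^ (n - S.card) := by
        refine mul_le_mul_of_nonneg_right ?_ (by positivity)
        set π : (Fin n → ↥𝒳) → (↥S → ↥𝒳) := fun c j => c j with hπ
        have hinjOn : Set.InjOn π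
            (Finset.univ.filter (fun c : Fin n → ↥𝒳 => (fun j => ((c j : ℝ))) ∈ V)) := by
          intro c hc c' hc' hcc
          simp only [Finset.coe_filter, Set.mem_setOf_eq, Finset.mem_univ, true_and] at hc hc'
          have : (fun j => ((c j : ℝ))) = fun j => ((c' j : ℝ)) := by
            refine hSinj _ hc _ hc' fun j hj => ?_
            have := congrFun hcc ⟨j, hj⟩
            simpa [π] using congrArg Subtype.val this
          funext j
          exact Subtype.ext (congrFun this j)
        calc ∑ c ∈ Finset.univ.filter (fun c : Fin n → ↥𝒳 => (fun j => ((c j : ℝ))) ∈ V),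
              ∏ j : ↥S, Q ((c j : ℝ))
            = ∑ t ∈ (Finset.univ.filter (fun c : Fin n → ↥𝒳 =>
                (fun j => ((c j : ℝ))) ∈ V)).image π, ∏ j : ↥S, Q ((t j : ℝ)) := by
              rw [Finset.sum_image (fun c hc c' hc' h => hinjOn hc hc' h)]
          _ ≤ ∑ t : ↥S → ↥𝒳, ∏ j : ↥S, Q ((t j : ℝ)) := by
              refine Finset.sum_le_sum_of_subset_of_nonneg (Finset.subset_univ _)
                fun t _ _ => Finset.prod_nonneg fun j _ => hQ0 _
          _ = 1 := by
              rw [← Fintype.piFinset_univ,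
                Finset.sum_prod_piFinset (Finset.univ : Finset ↥𝒳)
                  (fun (_ : ↥S) (x : ↥𝒳) => Q (x : ℝ))]
              calc ∏ _j : ↥S, ∑ x : ↥𝒳, Q (x : ℝ) = ∏ _j : ↥S, (1:ℝ) := by
                    refine Finset.prod_congr rfl fun j _ => ?_
                    rw [Finset.sum_coe_sort 𝒳 Q, hQsum]
                _ = 1 := Finset.prod_const_one
    _ = ρ ^ (n - S.card) := one_mul _
    _ ≤ ρ ^ (n - r) := pow_le_pow_of_le_one hρ0 hρ1 (Nat.sub_le_sub_left hdr n)


lemma exists_mem_span_earlier {R : ℕ} {W : Type*} [AddCommGroup W] [Module ℝ W]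
    {v : Fin R → W} (h : ¬ LinearIndependent ℝ v) :
    ∃ r : Fin R, v r ∈ Submodule.span ℝ (v '' {r' | r' < r}) := by
  classical
  obtain ⟨g, hsum, i, hi⟩ := Fintype.not_linearIndependent_iff.mp h
  set s := Finset.univ.filter fun r => g r ≠ 0 with hs
  have hne : s.Nonempty := ⟨i, by simp [hs, hi]⟩
  set r := s.max' hne with hr
  have hgr : g r ≠ 0 := by
    have := s.max'_mem hne
    simpa [hs] using this
  have h1 : ∑ r' ∈ s, g r' • v r' = 0 := by
    rw [← hsum]
    refine Finset.sum_subset (Finset.subset_univ s) fun x _ hx => ?_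
    have : g x = 0 := by simpa [hs] using hx
    simp [this]
  rw [← Finset.add_sum_erase _ _ (s.max'_mem hne)] at h1
  have hsplit : g r • v r = - ∑ r' ∈ s.erase r, g r' • v r' :=
    eq_neg_of_add_eq_zero_left h1
  have hvr : v r = (g r)⁻¹ • (g r • v r) := by
    rw [smul_smul, inv_mul_cancel₀ hgr, one_smul]
  refine ⟨r, ?_⟩
  rw [hvr, hsplit]
  refine Submodule.smul_mem _ _ (Submodule.neg_mem _ (Submodule.sum_mem _ fun x hx => ?_))
  refine Submodule.smul_mem _ _ (Submodule.subset_span ⟨x, ?_, rfl⟩)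
  exact lt_of_le_of_ne (Finset.le_max' s x (Finset.mem_erase.mp hx).2)
    (Finset.mem_erase.mp hx).1

lemma rank_lt_imp {n R : ℕ} (M : Matrix (Fin n) (Fin R) ℝ) (h : M.rank < R) :
    ∃ r : Fin R, (fun j => M j r) ∈
      Submodule.span ℝ ((fun r' => fun j => M j r') '' {r' | r' < r}) := by
  apply exists_mem_span_earlier (v := fun r => fun j => M j r)
  intro hli
  rw [Matrix.rank_eq_finrank_span_cols] at h
  have : Set.range M.col = Set.range (fun r => fun j => M j r) := rfl
  rw [this, finrank_span_eq_card hli, Fintype.card_fin] at h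
  exact lt_irrefl _ h

lemma sum_col_one {n : ℕ} (𝒳 : Finset ℝ) (Q : ℝ → ℝ) (hQsum : ∑ x ∈ 𝒳, Q x = 1) :
    ∑ c : Fin n → ↥𝒳, ∏ j, Q ((c j : ℝ)) = 1 := by
  classical
  rw [← Fintype.piFinset_univ,
    Finset.sum_prod_piFinset (Finset.univ : Finset ↥𝒳) (fun (_ : Fin n) (x : ↥𝒳) => Q (x : ℝ))]
  calc ∏ _j : Fin n, ∑ x : ↥𝒳, Q (x : ℝ) = ∏ _j : Fin n, (1:ℝ) := by
        refine Finset.prod_congr rfl fun j _ => ?_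
        rw [Finset.sum_coe_sort 𝒳 Q, hQsum]
    _ = 1 := Finset.prod_const_one

open scoped Classical in
lemma col_bound {n R : ℕ} (𝒳 : Finset ℝ) (P : Fin R → ℝ → ℝ)
    (hP0 : ∀ r x, 0 ≤ P r x)
    (hsum : ∀ r, ∑ x ∈ 𝒳, P r x = 1)
    (ρ : ℝ) (hρ0 : 0 ≤ ρ) (hρ1 : ρ ≤ 1) (hρ : ∀ r, ∀ x ∈ 𝒳, P r x ≤ ρ)
    (hRn : R ≤ n) (r : Fin R) :
    ∑ N : Fin R → Fin n → ↥𝒳, (∏ r', ∏ j, P r' ((N r' j : ℝ))) *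
      (if (fun j => ((N r j : ℝ))) ∈ Submodule.span ℝ
        ((fun r' => fun j => ((N r' j : ℝ))) '' {r' | r' < r}) then 1 else 0)
    ≤ ρ ^ (n - (r : ℕ)) := by
  classical
  set e := Equiv.piSplitAt r (fun _ : Fin R => Fin n → ↥𝒳) with he
  set f : (Fin R → Fin n → ↥𝒳) → ℝ := fun N => (∏ r', ∏ j, P r' ((N r' j : ℝ))) *
      (if (fun j => ((N r j : ℝ))) ∈ Submodule.span ℝ
        ((fun r' => fun j => ((N r' j : ℝ))) '' {r' | r' < r}) then 1 else 0) with hf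
  have hat : ∀ (c : Fin n → ↥𝒳) (g : {r' : Fin R // r' ≠ r} → Fin n → ↥𝒳),
      e.symm (c, g) r = c := by
    intro c g; simp [he]
  have hneq : ∀ (c : Fin n → ↥𝒳) (g : {r' : Fin R // r' ≠ r} → Fin n → ↥𝒳)
      (r' : Fin R) (h : r' ≠ r), e.symm (c, g) r' = g ⟨r', h⟩ := by
    intro c g r' h; simp [he, h]
  set V : ({r' : Fin R // r' ≠ r} → Fin n → ↥𝒳) → Submodule ℝ (Fin n → ℝ) := fun g =>
    Submodule.span ℝ ((fun x : {r' : Fin R // r' ≠ r} => fun j => ((g x j : ℝ))) ''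
      {x | (x : Fin R) < r}) with hV
  have himg : ∀ (c : Fin n → ↥𝒳) (g : {r' : Fin R // r' ≠ r} → Fin n → ↥𝒳),
      ((fun r' => fun j => ((e.symm (c, g) r' j : ℝ))) '' {r' | r' < r})
      = ((fun x : {r' : Fin R // r' ≠ r} => fun j => ((g x j : ℝ))) '' {x | (x : Fin R) < r}) := by
    intro c g
    ext w
    constructor
    · rintro ⟨r', hr', rfl⟩
      refine ⟨⟨r', ne_of_lt hr'⟩, hr', ?_⟩
      simp only [hneq c g r' (ne_of_lt hr')]
    · rintro ⟨x, hx, rfl⟩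
      refine ⟨(x : Fin R), hx, ?_⟩
      simp only [hneq c g (x : Fin R) x.2, Subtype.coe_eta]
  have hprod : ∀ (c : Fin n → ↥𝒳) (g : {r' : Fin R // r' ≠ r} → Fin n → ↥𝒳),
      (∏ r', ∏ j, P r' ((e.symm (c, g) r' j : ℝ)))
      = (∏ j, P r ((c j : ℝ))) * ∏ x : {r' : Fin R // r' ≠ r}, ∏ j, P x ((g x j : ℝ)) := by
    intro c g
    rw [← Finset.mul_prod_erase Finset.univ _ (Finset.mem_univ r)]
    congr 1
    · rw [hat]
    · rw [Finset.prod_subtype (p := fun r' : Fin R => r' ≠ r) (Finset.univ.erase r)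
        (fun x => by simp [Finset.mem_erase])
        (fun r' => ∏ j, P r' ((e.symm (c, g) r' j : ℝ)))]
      refine Finset.prod_congr rfl fun x _ => ?_
      simp only [hneq c g (x : Fin R) x.2, Subtype.coe_eta]
  have hfeq : ∀ (c : Fin n → ↥𝒳) (g : {r' : Fin R // r' ≠ r} → Fin n → ↥𝒳),
      f (e.symm (c, g)) = (∏ x : {r' : Fin R // r' ≠ r}, ∏ j, P x ((g x j : ℝ))) *
        ((∏ j, P r ((c j : ℝ))) * (if (fun j => ((c j : ℝ))) ∈ V g then 1 else 0)) := by
    intro c g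
    rw [hf]
    simp only
    rw [hprod c g, himg c g, hat c g]
    ring
  have key : (∑ N : Fin R → Fin n → ↥𝒳, f N)
      = ∑ g : {r' : Fin R // r' ≠ r} → Fin n → ↥𝒳,
          (∏ x : {r' : Fin R // r' ≠ r}, ∏ j, P x ((g x j : ℝ))) *
          ∑ c : Fin n → ↥𝒳,
            (∏ j, P r ((c j : ℝ))) * (if (fun j => ((c j : ℝ))) ∈ V g then 1 else 0) := by
    rw [← Equiv.sum_comp e.symm f, Fintype.sum_prod_type, Finset.sum_comm]
    refine Finset.sum_congr rfl fun g _ => ?_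
    rw [Finset.mul_sum]
    exact Finset.sum_congr rfl fun c _ => hfeq c g
  rw [key]
  have hrn : (r : ℕ) ≤ n := le_trans (le_of_lt r.2) hRn
  have hVrank : ∀ g, Module.finrank ℝ (V g) ≤ (r : ℕ) := by
    intro g
    rw [hV]
    simp only
    show Module.finrank ℝ (Submodule.span ℝ ((fun x : {r' : Fin R // r' ≠ r} => fun j => ((g x j : ℝ))) '' {x | (x : Fin R) < r})) ≤ (r : ℕ)
    rw [Set.image_eq_range]
    refine le_trans (finrank_range_le_card _) ?_
    have : Fintype.card ↥{x : {r' : Fin R // r' ≠ r} | (x : Fin R) < r} ≤ (r : ℕ) := by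
      have hinj : Function.Injective
          (fun x : ↥{x : {r' : Fin R // r' ≠ r} | (x : Fin R) < r} =>
            (⟨((x : {r' : Fin R // r' ≠ r}) : Fin R), x.2⟩ : Fin r)) := by
        intro a b hab
        apply Subtype.ext; apply Subtype.ext
        exact Fin.val_injective (by simpa using congrArg Fin.val hab)
      simpa using Fintype.card_le_of_injective _ hinj
    simpa using this
  have hinner : ∀ g, ∑ c : Fin n → ↥𝒳,
      (∏ j, P r ((c j : ℝ))) * (if (fun j => ((c j : ℝ))) ∈ V g then 1 else 0)
      ≤ ρ ^ (n - (r : ℕ)) := fun g =>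
    span_prob_bound hrn 𝒳 (P r) (hP0 r) (hsum r) ρ hρ0 hρ1 (hρ r) (V g) (hVrank g)
      (exists_coord_finset (V g))
  calc ∑ g : {r' : Fin R // r' ≠ r} → Fin n → ↥𝒳,
          (∏ x : {r' : Fin R // r' ≠ r}, ∏ j, P x ((g x j : ℝ))) *
          ∑ c : Fin n → ↥𝒳,
            (∏ j, P r ((c j : ℝ))) * (if (fun j => ((c j : ℝ))) ∈ V g then 1 else 0)
      ≤ ∑ g : {r' : Fin R // r' ≠ r} → Fin n → ↥𝒳,
          (∏ x : {r' : Fin R // r' ≠ r}, ∏ j, P x ((g x j : ℝ))) * ρ ^ (n - (r : ℕ)) := by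
        refine Finset.sum_le_sum fun g _ => ?_
        exact mul_le_mul_of_nonneg_left (hinner g)
          (Finset.prod_nonneg fun x _ => Finset.prod_nonneg fun j _ => hP0 _ _)
    _ = ρ ^ (n - (r : ℕ)) := by
        rw [← Finset.sum_mul]
        have : ∑ g : {r' : Fin R // r' ≠ r} → Fin n → ↥𝒳,
            ∏ x : {r' : Fin R // r' ≠ r}, ∏ j, P x ((g x j : ℝ)) = 1 := by
          rw [← Fintype.piFinset_univ,
            Finset.sum_prod_piFinset (Finset.univ : Finset (Fin n → ↥𝒳))
              (fun (x : {r' : Fin R // r' ≠ r}) (c : Fin n → ↥𝒳) => ∏ j, P x ((c j : ℝ)))]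
          calc ∏ x : {r' : Fin R // r' ≠ r}, ∑ c : Fin n → ↥𝒳, ∏ j, P x ((c j : ℝ))
              = ∏ _x : {r' : Fin R // r' ≠ r}, (1:ℝ) := by
                refine Finset.prod_congr rfl fun x _ => ?_
                exact sum_col_one 𝒳 (P x) (hsum x)
            _ = 1 := Finset.prod_const_one
        rw [this, one_mul]

lemma sum_pi_one {ι : Type*} [Fintype ι] [DecidableEq ι] (𝒳 : Finset ℝ) (Q : ι → ℝ → ℝ)
    (hQsum : ∀ i, ∑ x ∈ 𝒳, Q i x = 1) :
    ∑ c : ι → ↥𝒳, ∏ i, Q i ((c i : ℝ)) = 1 := by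
  classical
  rw [← Fintype.piFinset_univ,
    Finset.sum_prod_piFinset (Finset.univ : Finset ↥𝒳) (fun (i : ι) (x : ↥𝒳) => Q i (x : ℝ))]
  calc ∏ i : ι, ∑ x : ↥𝒳, Q i (x : ℝ) = ∏ _i : ι, (1:ℝ) := by
        refine Finset.prod_congr rfl fun i _ => ?_
        rw [Finset.sum_coe_sort 𝒳 (Q i), hQsum i]
    _ = 1 := Finset.prod_const_one

lemma sum_mat_one {n R : ℕ} (𝒳 : Finset ℝ) (P : Fin R → ℝ → ℝ)
    (hsum : ∀ r, ∑ x ∈ 𝒳, P r x = 1) :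
    ∑ M : Fin n → Fin R → ↥𝒳, ∏ j, ∏ r, P r ((M j r : ℝ)) = 1 := by
  classical
  rw [← Fintype.piFinset_univ,
    Finset.sum_prod_piFinset (Finset.univ : Finset (Fin R → ↥𝒳))
      (fun (_j : Fin n) (g : Fin R → ↥𝒳) => ∏ r, P r ((g r : ℝ)))]
  calc ∏ _j : Fin n, ∑ g : Fin R → ↥𝒳, ∏ r, P r ((g r : ℝ)) = ∏ _j : Fin n, (1:ℝ) := by
        refine Finset.prod_congr rfl fun j _ => ?_
        exact sum_pi_one 𝒳 P hsum
    _ = 1 := Finset.prod_const_one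

/-- An n×R random matrix with independent entries, entry (j,r) ~ P_r on a
finite alphabet 𝒳 ⊂ ℝ, with ρ = max_r max_{x∈𝒳} P_r x < 1, satisfies
Pr[rank X < R] ≤ Σ_{r=0}^{R-1} ρ^{n-r}, and Pr[rank X = R] → 1 as n → ∞. -/
theorem full_rank_whp (R : ℕ) (𝒳 : Finset ℝ) (P : Fin R → ℝ → ℝ)
    (hP0 : ∀ r x, 0 ≤ P r x) (hsupp : ∀ r x, x ∉ 𝒳 → P r x = 0)
    (hsum : ∀ r, ∑ x ∈ 𝒳, P r x = 1)
    (ρ : ℝ) (hρ0 : 0 ≤ ρ) (hρ1 : ρ < 1) (hρ : ∀ r, ∀ x ∈ 𝒳, P r x ≤ ρ) :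
    (∀ n : ℕ, R ≤ n →
      ∑ M : Fin n → Fin R → ↥𝒳, (∏ j, ∏ r, P r ((M j r : ℝ))) *
        (if (Matrix.of fun j r => ((M j r : ℝ))).rank < R then 1 else 0)
      ≤ ∑ r ∈ Finset.range R, ρ ^ (n - r)) ∧
    Filter.Tendsto (fun n : ℕ =>
      ∑ M : Fin n → Fin R → ↥𝒳, (∏ j, ∏ r, P r ((M j r : ℝ))) *
        (if (Matrix.of fun j r => ((M j r : ℝ))).rank = R then 1 else 0))
      Filter.atTop (nhds 1) := by
  classical
  have part1 : ∀ n : ℕ, R ≤ n →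
      ∑ M : Fin n → Fin R → ↥𝒳, (∏ j, ∏ r, P r ((M j r : ℝ))) *
        (if (Matrix.of fun j r => ((M j r : ℝ))).rank < R then 1 else 0)
      ≤ ∑ r ∈ Finset.range R, ρ ^ (n - r) := by
    intro n hRn
    set E : Fin R → (Fin n → Fin R → ↥𝒳) → Prop := fun r M =>
      (fun j => ((M j r : ℝ))) ∈ Submodule.span ℝ
        ((fun r' => fun j => ((M j r' : ℝ))) '' {r' | r' < r}) with hE
    have hpoint : ∀ M : Fin n → Fin R → ↥𝒳,
        (∏ j, ∏ r, P r ((M j r : ℝ))) *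
          (if (Matrix.of fun j r => ((M j r : ℝ))).rank < R then 1 else 0)
        ≤ ∑ r : Fin R, (∏ j, ∏ r', P r' ((M j r' : ℝ))) * (if E r M then 1 else 0) := by
      intro M
      have hpnn : (0:ℝ) ≤ ∏ j, ∏ r', P r' ((M j r' : ℝ)) :=
        Finset.prod_nonneg fun j _ => Finset.prod_nonneg fun r' _ => hP0 _ _
      by_cases hrk : (Matrix.of fun j r => ((M j r : ℝ))).rank < R
      · obtain ⟨r₀, hr₀⟩ := rank_lt_imp (Matrix.of fun j r => ((M j r : ℝ))) hrk
        rw [if_pos hrk, mul_one]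
        have hr₀' : E r₀ M := hr₀
        have h1 : (∏ j, ∏ r', P r' ((M j r' : ℝ)))
            = (∏ j, ∏ r', P r' ((M j r' : ℝ))) * (if E r₀ M then 1 else 0) := by
          rw [if_pos hr₀', mul_one]
        exact (le_of_eq h1).trans (Finset.single_le_sum
          (f := fun r => (∏ j, ∏ r', P r' ((M j r' : ℝ))) * (if E r M then 1 else 0))
          (fun r _ => mul_nonneg hpnn (by positivity)) (Finset.mem_univ r₀))
      · rw [if_neg hrk, mul_zero]
        exact Finset.sum_nonneg fun r _ => mul_nonneg hpnn (by positivity)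
    calc ∑ M : Fin n → Fin R → ↥𝒳, (∏ j, ∏ r, P r ((M j r : ℝ))) *
          (if (Matrix.of fun j r => ((M j r : ℝ))).rank < R then 1 else 0)
        ≤ ∑ M : Fin n → Fin R → ↥𝒳, ∑ r : Fin R,
            (∏ j, ∏ r', P r' ((M j r' : ℝ))) * (if E r M then 1 else 0) :=
          Finset.sum_le_sum fun M _ => hpoint M
      _ = ∑ r : Fin R, ∑ M : Fin n → Fin R → ↥𝒳,
            (∏ j, ∏ r', P r' ((M j r' : ℝ))) * (if E r M then 1 else 0) := Finset.sum_comm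
      _ ≤ ∑ r : Fin R, ρ ^ (n - (r : ℕ)) := by
          refine Finset.sum_le_sum fun r _ => ?_
          have hswap : ∑ M : Fin n → Fin R → ↥𝒳,
              (∏ j, ∏ r', P r' ((M j r' : ℝ))) * (if E r M then 1 else 0)
              = ∑ N : Fin R → Fin n → ↥𝒳, (∏ r', ∏ j, P r' ((N r' j : ℝ))) *
                (if (fun j => ((N r j : ℝ))) ∈ Submodule.span ℝ
                  ((fun r' => fun j => ((N r' j : ℝ))) '' {r' | r' < r}) then 1 else 0) := by
            refine Fintype.sum_equiv (Equiv.piComm fun (_ : Fin n) (_ : Fin R) => (↥𝒳))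
              _ _ fun M => ?_
            congr 1
            exact Finset.prod_comm
          rw [hswap]
          exact col_bound 𝒳 P hP0 hsum ρ hρ0 (le_of_lt hρ1) hρ hRn r
      _ = ∑ r ∈ Finset.range R, ρ ^ (n - r) := Fin.sum_univ_eq_sum_range (fun r => ρ ^ (n - r)) R
  refine ⟨part1, ?_⟩
  have hrank_le : ∀ (n : ℕ) (M : Fin n → Fin R → ↥𝒳),
      (Matrix.of fun j r => ((M j r : ℝ))).rank ≤ R := by
    intro n M
    have := Matrix.rank_le_card_width (Matrix.of fun j r => ((M j r : ℝ)))
    simpa using this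
  have hsplit : ∀ n : ℕ,
      ∑ M : Fin n → Fin R → ↥𝒳, (∏ j, ∏ r, P r ((M j r : ℝ))) *
        (if (Matrix.of fun j r => ((M j r : ℝ))).rank = R then 1 else 0)
      = 1 - ∑ M : Fin n → Fin R → ↥𝒳, (∏ j, ∏ r, P r ((M j r : ℝ))) *
        (if (Matrix.of fun j r => ((M j r : ℝ))).rank < R then 1 else 0) := by
    intro n
    rw [eq_sub_iff_add_eq, ← Finset.sum_add_distrib]
    have heq : ∑ M : Fin n → Fin R → ↥𝒳,
        ((∏ j, ∏ r, P r ((M j r : ℝ))) *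
          (if (Matrix.of fun j r => ((M j r : ℝ))).rank = R then 1 else 0) +
        (∏ j, ∏ r, P r ((M j r : ℝ))) *
          (if (Matrix.of fun j r => ((M j r : ℝ))).rank < R then 1 else 0))
        = ∑ M : Fin n → Fin R → ↥𝒳, ∏ j, ∏ r, P r ((M j r : ℝ)) := by
      refine Finset.sum_congr rfl fun M _ => ?_
      rcases lt_or_eq_of_le (hrank_le n M) with h | h
      · rw [if_neg (ne_of_lt h), if_pos h]; ring
      · rw [if_pos h, if_neg (not_lt_of_ge (le_of_eq h.symm))]; ring
    rw [heq, sum_mat_one 𝒳 P hsum]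
  have hub : ∀ n : ℕ,
      ∑ M : Fin n → Fin R → ↥𝒳, (∏ j, ∏ r, P r ((M j r : ℝ))) *
        (if (Matrix.of fun j r => ((M j r : ℝ))).rank = R then 1 else 0) ≤ 1 := by
    intro n
    calc ∑ M : Fin n → Fin R → ↥𝒳, (∏ j, ∏ r, P r ((M j r : ℝ))) *
          (if (Matrix.of fun j r => ((M j r : ℝ))).rank = R then 1 else 0)
        ≤ ∑ M : Fin n → Fin R → ↥𝒳, ∏ j, ∏ r, P r ((M j r : ℝ)) := by
          refine Finset.sum_le_sum fun M _ => ?_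
          have hpnn : (0:ℝ) ≤ ∏ j, ∏ r, P r ((M j r : ℝ)) :=
            Finset.prod_nonneg fun j _ => Finset.prod_nonneg fun r _ => hP0 _ _
          split
          · rw [mul_one]
          · rw [mul_zero]; exact hpnn
      _ = 1 := sum_mat_one 𝒳 P hsum
  have h0 : Filter.Tendsto (fun n : ℕ => ∑ r ∈ Finset.range R, ρ ^ (n - r))
      Filter.atTop (nhds 0) := by
    have : Filter.Tendsto (fun n : ℕ => ∑ r ∈ Finset.range R, ρ ^ (n - r))
        Filter.atTop (nhds (∑ r ∈ Finset.range R, (0:ℝ))) := by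
      refine tendsto_finset_sum _ fun r _ => ?_
      exact (tendsto_pow_atTop_nhds_zero_of_lt_one hρ0 hρ1).comp
        (Filter.tendsto_sub_atTop_nat r)
    simpa using this
  have hlow : Filter.Tendsto (fun n : ℕ => 1 - ∑ r ∈ Finset.range R, ρ ^ (n - r))
      Filter.atTop (nhds 1) := by
    have := Filter.Tendsto.sub (tendsto_const_nhds (x := (1:ℝ)) (f := Filter.atTop)) h0
    simpa using this
  refine tendsto_of_tendsto_of_tendsto_of_le_of_le' hlow tendsto_const_nhds ?_
    (Filter.Eventually.of_forall hub)
  refine Filter.eventually_atTop.mpr ⟨R, fun n hn => ?_⟩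
  rw [hsplit n]
  have := part1 n hn
  linarith
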